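/- Under the conditions D > 0, δ > 0, w > 0 and D < wδ/4, for every complex z with Re(z) ≥ 0 and every a, |λ_a(z)| = |(D e^{-zτ}/(z+δ)) · 2 cos(2πa/n)| < w/2. Hence no z with Re(z) ≥ 0 can satisfy λ_a(z) = w/(1 - e^{-wz}), since the latter has modulus ≥ w/2. -/

import Mathlib

/-- Under D < wδ/4, for Re(z) ≥ 0, |λ_a(z)| < w/2, hence λ_a(z) ≠ w/(1 - e^{-wz})
since the latter has modulus ≥ w/2. -/
theorem ring_stability_condition
    (D δ w τ : ℝ) (hD : 0 < D) (hδ : 0 < δ) (hw : 0 < w) (hτ : 0 ≤ τ)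
    (hcond : D < w * δ / 4)
    (n : ℕ) (hn : 1 ≤ n) (a : ℤ) (ha : 1 ≤ a ∧ a ≤ n)
    (z : ℂ) (hz : 0 ≤ z.re) :
    ‖((D : ℂ) * Complex.exp (-z * τ) / (z + δ)) * 2 *
        (Real.cos (2 * Real.pi * a / n) : ℂ)‖ < w / 2 ∧
    (Complex.exp (-(w : ℂ) * z) ≠ 1 →
      ((D : ℂ) * Complex.exp (-z * τ) / (z + δ)) * 2 *
          (Real.cos (2 * Real.pi * a / n) : ℂ) ≠
        (w : ℂ) / (1 - Complex.exp (-(w : ℂ) * z))) := by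
  have hzd : δ ≤ ‖z + δ‖ := by
    calc δ ≤ (z + (δ:ℂ)).re := by simp; linarith
    _ ≤ |(z + (δ:ℂ)).re| := le_abs_self _
    _ ≤ ‖z + δ‖ := Complex.abs_re_le_norm _
  have hR : (0:ℝ) < ‖z + δ‖ := lt_of_lt_of_le hδ hzd
  have hexp : ‖Complex.exp (-z * τ)‖ ≤ 1 := by
    rw [Complex.norm_exp, Real.exp_le_one_iff]
    simp [Complex.mul_re]
    nlinarith [mul_nonneg hz hτ]
  have hC : |Real.cos (2 * Real.pi * a / n)| ≤ 1 := Real.abs_cos_le_one _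
  have habs : ‖((D : ℂ) * Complex.exp (-z * τ) / (z + δ)) * 2 *
      (Real.cos (2 * Real.pi * a / n) : ℂ)‖ < w / 2 := by
    have key : ‖((D : ℂ) * Complex.exp (-z * τ) / (z + δ)) * 2 *
        (Real.cos (2 * Real.pi * a / n) : ℂ)‖ ≤ D / δ * 2 := by
      rw [norm_mul, norm_mul, norm_div, norm_mul, Complex.norm_real, Complex.norm_real,
        Complex.norm_two, Real.norm_eq_abs, Real.norm_eq_abs, abs_of_pos hD]
      calc D * ‖Complex.exp (-z * τ)‖ / ‖z + δ‖ * 2 *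
            |Real.cos (2 * Real.pi * a / n)|
          ≤ D * 1 / δ * 2 * 1 := by gcongr
          _ = D / δ * 2 := by ring
    have hlt : D / δ * 2 < w / 2 := by
      rw [div_mul_eq_mul_div, div_lt_div_iff₀ hδ (by norm_num : (0:ℝ) < 2)]
      nlinarith
    linarith
  refine ⟨habs, fun h1 heq => ?_⟩
  have hexp2 : ‖Complex.exp (-(w:ℂ) * z)‖ ≤ 1 := by
    rw [Complex.norm_exp, Real.exp_le_one_iff]
    simp [Complex.mul_re]
    nlinarith [mul_nonneg hw.le hz]
  have hden : ‖1 - Complex.exp (-(w:ℂ) * z)‖ ≤ 2 := by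
    calc ‖1 - Complex.exp (-(w:ℂ) * z)‖
        ≤ ‖(1:ℂ)‖ + ‖Complex.exp (-(w:ℂ) * z)‖ := by
          simpa using norm_sub_le 1 (Complex.exp (-(w:ℂ) * z))
      _ ≤ 1 + 1 := by
          have h := hexp2
          simp only [neg_mul] at h
          simp [h]
      _ = 2 := by norm_num
  have hdpos : 0 < ‖1 - Complex.exp (-(w:ℂ) * z)‖ := by
    rw [norm_pos_iff]
    intro h
    apply h1
    have := sub_eq_zero.mp h
    exact this.symm
  have hge : w / 2 ≤ ‖(w : ℂ) / (1 - Complex.exp (-(w:ℂ) * z))‖ := by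
    rw [norm_div, Complex.norm_real, Real.norm_eq_abs, abs_of_pos hw]
    exact div_le_div_of_nonneg_left hw.le hdpos hden
  rw [heq] at habs
  linarith
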